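/- Let (𝔄,𝒜,L) be a compact quantum metric space (i.e., a compact quantum semi metric space in which 𝒜 is norm-dense in 𝔄) and let Φ : 𝔄 → 𝔅 be a surjective unital *-homomorphism of unital C*-algebras. Define d on S(𝔅) by d(ν,ν') = ρ_L(ν∘Φ, ν'∘Φ), L_d(c) = sup{ |ν(c) − ν'(c)|/d(ν,ν') : ν,ν' ∈ S(𝔅), d(ν,ν') ≠ 0 }, and 𝒞 = { c ∈ 𝔅 : ν ↦ ν(c) is d-continuous and L_d(c) < ∞ }. Then 𝒞 is norm-dense in 𝔅. -/

import Mathlib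

open scoped ENNReal CStarAlgebra

noncomputable section

variable {A B : Type*} [CStarAlgebra A] [CStarAlgebra B]

/-- A state on a unital C*-algebra, viewed as an element of the weak* dual: a continuous
linear functional sending the unit to `1` and taking nonnegative real values on positive
elements `star a * a`. -/
def IsState {A : Type*} [CStarAlgebra A] (φ : WeakDual ℂ A) : Prop :=
  φ 1 = 1 ∧ ∀ a : A, 0 ≤ (φ (star a * a)).re ∧ (φ (star a * a)).im = 0

/-- The semi metric `ρ_L` on the state space of `A` associated with a subset `𝒜 ⊆ A` and a
function `L : A → ℝ`: `ρ_L(μ, ν) = sup { |μ a - ν a| : a ∈ 𝒜, L a ≤ 1 }`, valued in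
`[0, ∞]`. -/
def rhoL {A : Type*} [CStarAlgebra A] (𝒜 : Set A) (L : A → ℝ) (μ ν : WeakDual ℂ A) : ℝ≥0∞ :=
  ⨆ a ∈ {a : A | a ∈ 𝒜 ∧ L a ≤ 1}, (‖μ a - ν a‖₊ : ℝ≥0∞)

/-- The pullback `ν ∘ Φ` of a state `ν` on `B` along a unital *-homomorphism `Φ : A → B`
(star algebra homomorphisms between C*-algebras are automatically continuous). -/
def pull (Φ : A →⋆ₐ[ℂ] B) (ν : WeakDual ℂ B) : WeakDual ℂ A :=
  (ν : B →L[ℂ] ℂ).comp ⟨Φ.toLinearMap, map_continuous Φ⟩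

/-- The semi metric `d` on the state space of `B` induced by `(𝒜, L)` and `Φ`:
`d(ν, ν') = ρ_L(ν∘Φ, ν'∘Φ)`. -/
def dPull (𝒜 : Set A) (L : A → ℝ) (Φ : A →⋆ₐ[ℂ] B) (ν ν' : WeakDual ℂ B) : ℝ≥0∞ :=
  rhoL 𝒜 L (pull Φ ν) (pull Φ ν')

/-- The Lipschitz-type seminorm `L_d` on `B` induced by the semi metric `d = dPull` on the
state space of `B`: `L_d(c) = sup { |ν c - ν' c| / d(ν, ν') : ν, ν' states, d(ν, ν') ≠ 0 }`,
valued in `[0, ∞]`. -/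
def Ld (𝒜 : Set A) (L : A → ℝ) (Φ : A →⋆ₐ[ℂ] B) (c : B) : ℝ≥0∞ :=
  ⨆ (ν : {φ : WeakDual ℂ B // IsState φ}) (ν' : {φ : WeakDual ℂ B // IsState φ})
    (_ : dPull 𝒜 L Φ ν.1 ν'.1 ≠ 0), (‖ν.1 c - ν'.1 c‖₊ : ℝ≥0∞) / dPull 𝒜 L Φ ν.1 ν'.1

/-- Continuity of the evaluation map `ν ↦ ν c` on the state space of `B` with respect to the
semi metric `d = dPull`. -/
def DContinuous (𝒜 : Set A) (L : A → ℝ) (Φ : A →⋆ₐ[ℂ] B) (c : B) : Prop :=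
  ∀ ν : {φ : WeakDual ℂ B // IsState φ}, ∀ ε : ℝ, 0 < ε → ∃ δ : ℝ, 0 < δ ∧
    ∀ ν' : {φ : WeakDual ℂ B // IsState φ},
      dPull 𝒜 L Φ ν'.1 ν.1 < ENNReal.ofReal δ → ‖ν'.1 c - ν.1 c‖ < ε

lemma key_ineq (𝒜 : Submodule ℂ A) (L : A → ℝ)
    (hL_nonneg : ∀ a ∈ 𝒜, 0 ≤ L a)
    (hL_smul : ∀ (c : ℂ), ∀ a ∈ 𝒜, L (c • a) = ‖c‖ * L a)
    (hL_zero : ∀ a ∈ 𝒜, (L a = 0 ↔ ∃ c : ℂ, a = c • (1 : A)))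
    (Φ : A →⋆ₐ[ℂ] B) (a : A) (ha : a ∈ 𝒜)
    (ν ν' : WeakDual ℂ B) (hν : IsState ν) (hν' : IsState ν') :
    (‖ν (Φ a) - ν' (Φ a)‖₊ : ℝ≥0∞) ≤
      ENNReal.ofReal (L a) * dPull (𝒜 : Set A) L Φ ν ν' := by
  by_cases h0 : L a = 0
  · obtain ⟨c, rfl⟩ := (hL_zero a ha).mp h0
    simp [hν.1, hν'.1]
  · have hLpos : 0 < L a := lt_of_le_of_ne (hL_nonneg a ha) (Ne.symm h0)
    set b : A := ((L a : ℂ))⁻¹ • a with hb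
    have hbmem : b ∈ 𝒜 := 𝒜.smul_mem _ ha
    have hLb : L b ≤ 1 := by
      rw [hb, hL_smul _ a ha]
      have hn : ‖((L a : ℂ))⁻¹‖ = (L a)⁻¹ := by
        rw [norm_inv, Complex.norm_real, Real.norm_of_nonneg hLpos.le]
      rw [hn, inv_mul_cancel₀ (ne_of_gt hLpos)]
    have hd : (‖ν (Φ b) - ν' (Φ b)‖₊ : ℝ≥0∞) ≤ dPull (𝒜 : Set A) L Φ ν ν' := by
      have := le_iSup₂ (f := fun (x : A) (_ : x ∈ {x : A | x ∈ (𝒜 : Set A) ∧ L x ≤ 1}) =>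
        (‖(pull Φ ν) x - (pull Φ ν') x‖₊ : ℝ≥0∞)) b ⟨hbmem, hLb⟩
      exact this
    have hsmul : ν (Φ a) - ν' (Φ a) = (L a : ℂ) * (ν (Φ b) - ν' (Φ b)) := by
      have hΦb : Φ b = ((L a : ℂ))⁻¹ • Φ a := by rw [hb, map_smul]
      have hne : (L a : ℂ) ≠ 0 := by
        simpa using (Complex.ofReal_ne_zero.mpr h0)
      rw [hΦb, map_smul, map_smul]
      rw [smul_eq_mul, smul_eq_mul, ← mul_sub, ← mul_assoc, mul_inv_cancel₀ hne, one_mul]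
    have hnn : (‖ν (Φ a) - ν' (Φ a)‖₊ : ℝ≥0∞)
        = ENNReal.ofReal (L a) * (‖ν (Φ b) - ν' (Φ b)‖₊ : ℝ≥0∞) := by
      rw [hsmul, nnnorm_mul, ENNReal.coe_mul]
      congr 1
      rw [← Real.enorm_eq_ofReal hLpos.le, enorm_eq_nnnorm]
      norm_cast
    rw [hnn]
    exact mul_le_mul_right hd _

/-- Proposition 7 of the paper, for a quantum family over `ℂ`.  Let
`(A, 𝒜, L)` be a compact quantum metric space (so `𝒜` is norm-dense in `A`) and
`Φ : A → B` a surjective unital *-homomorphism.  With `d(ν, ν') = ρ_L(ν∘Φ, ν'∘Φ)`, the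
space `𝒞 = { c ∈ B : ν ↦ ν c is d-continuous and L_d c < ∞ }` is norm-dense in `B`. -/
theorem pullback_lipschitz_dense (𝒜 : Submodule ℂ A)
    (hstar : ∀ a ∈ 𝒜, star a ∈ 𝒜) (hone : (1 : A) ∈ 𝒜) (L : A → ℝ)
    (hL_nonneg : ∀ a ∈ 𝒜, 0 ≤ L a)
    (hL_add : ∀ a ∈ 𝒜, ∀ b ∈ 𝒜, L (a + b) ≤ L a + L b)
    (hL_smul : ∀ (c : ℂ), ∀ a ∈ 𝒜, L (c • a) = ‖c‖ * L a)
    (hL_star : ∀ a ∈ 𝒜, L (star a) = L a)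
    (hL_zero : ∀ a ∈ 𝒜, (L a = 0 ↔ ∃ c : ℂ, a = c • (1 : A)))
    (hQSM : ∀ μ : WeakDual ℂ A, IsState μ → ∀ ε : ℝ, 0 < ε →
      ∃ U : Set (WeakDual ℂ A), IsOpen U ∧ μ ∈ U ∧
        ∀ μ' ∈ U, IsState μ' → rhoL (𝒜 : Set A) L μ' μ < ENNReal.ofReal ε)
    (hdense : Dense (𝒜 : Set A))
    (Φ : A →⋆ₐ[ℂ] B) (hΦsurj : Function.Surjective Φ) :
    Dense {c : B | DContinuous (𝒜 : Set A) L Φ c ∧ Ld (𝒜 : Set A) L Φ c ≠ ⊤} := by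
  have hcont : Continuous Φ := map_continuous Φ
  have hdense2 : Dense (Φ '' (𝒜 : Set A)) := by
    rw [dense_iff_closure_eq]
    apply Set.eq_univ_of_univ_subset
    calc Set.univ = Φ '' Set.univ := by
          rw [Set.image_univ, Set.range_eq_univ.mpr hΦsurj]
      _ = Φ '' closure (𝒜 : Set A) := by rw [hdense.closure_eq]
      _ ⊆ closure (Φ '' (𝒜 : Set A)) := image_closure_subset_closure_image hcont
  refine hdense2.mono ?_
  rintro _ ⟨a, ha, rfl⟩
  have key := fun (μ μ' : {φ : WeakDual ℂ B // IsState φ}) =>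
    key_ineq 𝒜 L hL_nonneg hL_smul hL_zero Φ a ha μ.1 μ'.1 μ.2 μ'.2
  constructor
  · -- DContinuous
    intro ν ε hε
    by_cases h0 : L a = 0
    · refine ⟨1, one_pos, fun ν' _ => ?_⟩
      have h := key ν' ν
      rw [h0, ENNReal.ofReal_zero, zero_mul, nonpos_iff_eq_zero] at h
      have hz : ν'.1 (Φ a) - ν.1 (Φ a) = 0 := by
        have : ‖ν'.1 (Φ a) - ν.1 (Φ a)‖₊ = 0 := by exact_mod_cast h
        simpa using this
      rw [hz]; simpa using hε
    · have hLpos : 0 < L a := lt_of_le_of_ne (hL_nonneg a ha) (Ne.symm h0)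
      refine ⟨ε / L a, div_pos hε hLpos, fun ν' hlt => ?_⟩
      have h := key ν' ν
      have h2 : (‖ν'.1 (Φ a) - ν.1 (Φ a)‖₊ : ℝ≥0∞) <
          ENNReal.ofReal (L a) * ENNReal.ofReal (ε / L a) := by
        refine lt_of_le_of_lt h ?_
        exact (ENNReal.mul_lt_mul_iff_right (ENNReal.ofReal_pos.mpr hLpos).ne' ENNReal.ofReal_ne_top).mpr hlt
      rw [← ENNReal.ofReal_mul hLpos.le, mul_comm, div_mul_cancel₀ ε (ne_of_gt hLpos),
        ← enorm_eq_nnnorm, ← ofReal_norm] at h2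
      exact (ENNReal.ofReal_lt_ofReal_iff hε).mp h2
  · -- Ld ≠ ⊤
    have hle : Ld (𝒜 : Set A) L Φ (Φ a) ≤ ENNReal.ofReal (L a) :=
      iSup_le fun ν => iSup_le fun ν' => iSup_le fun _ =>
        ENNReal.div_le_of_le_mul (key ν ν')
    exact ne_top_of_le_ne_top ENNReal.ofReal_ne_top hle


end
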